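/- Let f : ℕ → ℕ be strictly increasing with f(1) ≥ 1. If the set {f(k+1) − f(k) : k ≥ 1} of consecutive gaps is unbounded, then μ_f = Σ_{k≥1} 10^(−f(k)) is irrational. -/
import Mathlib

theorem mu_f_irrational_of_unbounded_gaps (f : ℕ → ℕ)
    (hmono : ∀ k : ℕ, 1 ≤ k → f k < f (k + 1)) (hf1 : 1 ≤ f 1)
    (hgaps : ∀ B : ℕ, ∃ k : ℕ, 1 ≤ k ∧ B ≤ f (k + 1) - f k) :
    Irrational (∑' k : ℕ, (10 : ℝ) ^ (-(f (k + 1) : ℤ))) := by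
  have hfk : ∀ k, 1 ≤ k → k ≤ f k := by
    intro k hk
    induction k with
    | zero => omega
    | succ n ih =>
      by_cases hn : 1 ≤ n
      · have h1 := hmono n hn; have h2 := ih hn; omega
      · have : n = 0 := by omega
        subst this; simpa using hf1
  have hfadd : ∀ a j, 1 ≤ a → f a + j ≤ f (a + j) := by
    intro a j ha
    induction j with
    | zero => simp
    | succ m ih =>
      have h1 : 1 ≤ a + m := by omega
      have h2 := hmono (a + m) h1
      have h3 : a + (m + 1) = (a + m) + 1 := by ring
      rw [h3]; omega
  have hfmono : ∀ a b, 1 ≤ a → a ≤ b → f a ≤ f b := by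
    intro a b ha hab
    have := hfadd a (b - a) ha
    have hb : a + (b - a) = b := by omega
    rw [hb] at this; omega
  set g : ℕ → ℝ := fun k => (10 : ℝ) ^ (-(f (k + 1) : ℤ)) with hg
  have hg_nonneg : ∀ k, 0 ≤ g k := fun k => le_of_lt (zpow_pos (by norm_num) _)
  have hg_le : ∀ k, g k ≤ (1 / 10 : ℝ) ^ k := by
    intro k
    have hk : (k : ℤ) ≤ (f (k + 1) : ℤ) := by
      have := hfk (k + 1) (by omega); exact_mod_cast le_trans (by omega) this
    have : (10 : ℝ) ^ (-(f (k + 1) : ℤ)) ≤ (10 : ℝ) ^ (-(k : ℤ)) :=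
      zpow_le_zpow_right₀ (by norm_num) (by omega)
    calc g k ≤ (10 : ℝ) ^ (-(k : ℤ)) := this
      _ = (1 / 10 : ℝ) ^ k := by
          rw [zpow_neg, ← zpow_natCast, ← inv_zpow, zpow_natCast]; norm_num
  have hg_sum : Summable g :=
    Summable.of_nonneg_of_le hg_nonneg hg_le (summable_geometric_of_lt_one (by norm_num) (by norm_num))
  rintro ⟨r, hr⟩
  set S : ℝ := ∑' k : ℕ, g k with hS
  have hq : 0 < r.den := r.pos
  have hqS : (r.den : ℝ) * S = (r.num : ℝ) := by
    rw [← hr, Rat.cast_def]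
    field_simp
  obtain ⟨B, hB⟩ := pow_unbounded_of_one_lt (2 * (r.den : ℝ)) (by norm_num : (1:ℝ) < 10)
  obtain ⟨n, hn1, hngap⟩ := hgaps B
  have hgap : f n + B ≤ f (n + 1) := by
    have := hmono n hn1; omega
  set a : ℕ → ℝ := fun j => (10 : ℝ) ^ ((f n : ℤ) - (f (j + 1) : ℤ)) with haa
  have ha_eq : ∀ j, a j = (10 : ℝ) ^ (f n : ℤ) * g j := by
    intro j
    show (10 : ℝ) ^ ((f n : ℤ) - (f (j + 1) : ℤ)) = (10 : ℝ) ^ (f n : ℤ) * (10 : ℝ) ^ (-(f (j + 1) : ℤ))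
    rw [sub_eq_add_neg, zpow_add₀ (by norm_num : (10:ℝ) ≠ 0)]
  have ha_sum : Summable a := by
    rw [show a = fun j => (10 : ℝ) ^ (f n : ℤ) * g j from funext ha_eq]
    exact hg_sum.mul_left _
  have h1 : (10 : ℝ) ^ (f n : ℤ) * S = ∑' j, a j := by
    rw [hS, ← tsum_mul_left]
    exact tsum_congr fun j => (ha_eq j).symm
  have ha_tail_sum : Summable (fun j => a (j + n)) := (summable_nat_add_iff n).mpr ha_sum
  have h2 : ∑' j, a j = (∑ j ∈ Finset.range n, a j) + ∑' j, a (j + n) :=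
    (Summable.sum_add_tsum_nat_add n ha_sum).symm
  set Hint : ℤ := ∑ j ∈ Finset.range n, 10 ^ (f n - f (j + 1)) with hHint
  have hH : (∑ j ∈ Finset.range n, a j) = (Hint : ℝ) := by
    rw [hHint]
    push_cast
    refine Finset.sum_congr rfl fun j hj => ?_
    have hjn : j + 1 ≤ n := Finset.mem_range.mp hj
    have hle : f (j + 1) ≤ f n := hfmono (j + 1) n (by omega) hjn
    have hc : (f n : ℤ) - (f (j + 1) : ℤ) = ((f n - f (j + 1) : ℕ) : ℤ) := by omega
    show (10 : ℝ) ^ ((f n : ℤ) - (f (j + 1) : ℤ)) = (10 : ℝ) ^ (f n - f (j + 1))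
    rw [hc, zpow_natCast]
  set T : ℝ := ∑' j, a (j + n) with hT
  have hT_pos : 0 < T := by
    have h0 : a (0 + n) ≤ T := Summable.le_tsum ha_tail_sum 0 (fun i _ => le_of_lt (zpow_pos (by norm_num) _))
    have : (0:ℝ) < a (0 + n) := zpow_pos (by norm_num) _
    linarith
  have hT_le : T ≤ (10 : ℝ) ^ (-(B : ℤ)) * (10 / 9) := by
    have hterm : ∀ j, a (j + n) ≤ (10 : ℝ) ^ (-(B : ℤ)) * (1 / 10 : ℝ) ^ j := by
      intro j
      have hexp : (f n : ℤ) - (f (j + n + 1) : ℤ) ≤ -(B : ℤ) - j := by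
        have h1 : f (n + 1) + j ≤ f (n + 1 + j) := hfadd (n + 1) j (by omega)
        have h2 : n + 1 + j = j + n + 1 := by ring
        rw [h2] at h1
        omega
      calc a (j + n) ≤ (10 : ℝ) ^ (-(B : ℤ) - j) :=
            zpow_le_zpow_right₀ (by norm_num) hexp
        _ = (10 : ℝ) ^ (-(B : ℤ)) * (1 / 10 : ℝ) ^ j := by
            rw [sub_eq_add_neg, zpow_add₀ (by norm_num : (10:ℝ) ≠ 0)]
            congr 1
            rw [zpow_neg, ← zpow_natCast, ← inv_zpow, zpow_natCast]; norm_num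
    have hrs : Summable (fun j => (10 : ℝ) ^ (-(B : ℤ)) * (1 / 10 : ℝ) ^ j) :=
      (summable_geometric_of_lt_one (by norm_num) (by norm_num)).mul_left _
    calc T ≤ ∑' j, (10 : ℝ) ^ (-(B : ℤ)) * (1 / 10 : ℝ) ^ j :=
          Summable.tsum_le_tsum hterm ha_tail_sum hrs
      _ = (10 : ℝ) ^ (-(B : ℤ)) * (10 / 9) := by
          rw [tsum_mul_left, tsum_geometric_of_lt_one (by norm_num) (by norm_num)]
          norm_num
  -- the key integer
  set m : ℤ := r.num * 10 ^ (f n) - (r.den : ℤ) * Hint with hm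
  have hkey : (r.den : ℝ) * T = (m : ℝ) := by
    have hsplit : (10 : ℝ) ^ (f n : ℤ) * S = (Hint : ℝ) + T := by
      rw [h1, h2, hH, hT]
    have h10 : (10 : ℝ) ^ (f n : ℤ) = ((10 ^ (f n) : ℤ) : ℝ) := by
      push_cast; rw [zpow_natCast]
    have : (r.den : ℝ) * ((10 : ℝ) ^ (f n : ℤ) * S) = (r.den : ℝ) * ((Hint : ℝ) + T) := by
      rw [hsplit]
    have hnum : (r.den : ℝ) * ((10 : ℝ) ^ (f n : ℤ) * S) = (r.num : ℝ) * (10 : ℝ) ^ (f n : ℤ) := by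
      rw [← hqS]; ring
    rw [hnum] at this
    rw [hm]
    push_cast
    rw [← zpow_natCast (10:ℝ) (f n)]
    linarith
  have hm_pos : (0 : ℝ) < (m : ℝ) := by
    rw [← hkey]
    positivity
  have hm_lt : (m : ℝ) < 1 := by
    rw [← hkey]
    have h1 : (r.den : ℝ) * T ≤ (r.den : ℝ) * ((10 : ℝ) ^ (-(B : ℤ)) * (10 / 9)) := by
      apply mul_le_mul_of_nonneg_left hT_le (by positivity)
    have h2 : (10 : ℝ) ^ (-(B : ℤ)) = ((10 : ℝ) ^ B)⁻¹ := by
      rw [zpow_neg, zpow_natCast]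
    have hBpos : (0:ℝ) < (10:ℝ) ^ B := by positivity
    have hqpos : (0:ℝ) < (r.den : ℝ) := by exact_mod_cast hq
    have h3 : (r.den : ℝ) * (((10 : ℝ) ^ B)⁻¹ * (10 / 9)) < 1 := by
      have h4 : (r.den : ℝ) * (10 / 9) < (10:ℝ) ^ B := by nlinarith
      calc (r.den : ℝ) * (((10 : ℝ) ^ B)⁻¹ * (10 / 9))
            = ((r.den : ℝ) * (10 / 9)) * ((10:ℝ) ^ B)⁻¹ := by ring
        _ < (10:ℝ) ^ B * ((10:ℝ) ^ B)⁻¹ := mul_lt_mul_of_pos_right h4 (inv_pos.mpr hBpos)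
        _ = 1 := mul_inv_cancel₀ (ne_of_gt hBpos)
    rw [h2] at h1
    linarith
  have hm0 : 0 < m := by exact_mod_cast hm_pos
  have hm1 : m < 1 := by exact_mod_cast hm_lt
  omega
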